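/- A function φ : [1]^m → [1]^n between finite Boolean lattices is a surjective lattice homomorphism if and only if it is a composite of codegeneracies (projections deleting one coordinate) and principal coordinate transpositions (transpositions of adjacent coordinates). -/

import Mathlib

/-- Composites of codegeneracies (projections deleting one coordinate) and
principal coordinate transpositions (transpositions of adjacent coordinates)
between finite Boolean lattices. -/
inductive DegenTranspComposite :
    ∀ {m n : ℕ}, ((Fin m → Bool) → (Fin n → Bool)) → Prop
  | id (n : ℕ) : DegenTranspComposite (id : (Fin n → Bool) → (Fin n → Bool))
  | codeg {m n : ℕ} (f : (Fin m → Bool) → (Fin n → Bool)) (j : Fin (m + 1)) :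
      DegenTranspComposite f →
      DegenTranspComposite (fun x : Fin (m + 1) → Bool => f (x ∘ j.succAbove))
  | transp {m n : ℕ} (f : (Fin m → Bool) → (Fin n → Bool)) (i j : Fin m)
      (h : (j : ℕ) = (i : ℕ) + 1) :
      DegenTranspComposite f →
      DegenTranspComposite (fun x : Fin m → Bool => f (x ∘ Equiv.swap i j))

namespace DTCAux

open Equiv Function

/-- Any coordinatewise nonconstant lattice hom to `Bool` is a coordinate projection. -/
lemma exists_coord {m : ℕ} (f : (Fin m → Bool) → Bool)
    (hsup : ∀ x y, f (x ⊔ y) = f x ⊔ f y)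
    (hinf : ∀ x y, f (x ⊓ y) = f x ⊓ f y)
    (ht : ∃ x, f x = true) (hff : ∃ x, f x = false) :
    ∃ k, ∀ x, f x = x k := by
  classical
  have mono : ∀ {x y : Fin m → Bool}, x ≤ y → f x ≤ f y := by
    intro x y hxy
    have h := hsup x y
    rw [sup_eq_right.2 hxy] at h
    exact h ▸ le_sup_left
  obtain ⟨x₀, hx₀⟩ := ht
  obtain ⟨x₁, hx₁⟩ := hff
  set S : Finset (Fin m → Bool) := Finset.univ.filter (fun x => f x = true) with hS
  have hSne : S.Nonempty := ⟨x₀, by simp [hS, hx₀]⟩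
  let F : InfHom (Fin m → Bool) Bool := ⟨f, hinf⟩
  set a : Fin m → Bool := S.inf' hSne id with ha
  have hfa : f a = true := by
    have h1 : f a = S.inf' hSne (f ∘ id) := map_finset_inf' F hSne id
    rw [h1]
    have h2 : S.inf' hSne (f ∘ id) = S.inf' hSne (fun _ => true) :=
      Finset.inf'_congr hSne rfl (fun x hx => (Finset.mem_filter.1 hx).2)
    rw [h2, Finset.inf'_const]
  have hmem : ∀ x, f x = true ↔ a ≤ x := by
    intro x
    constructor
    · intro hx
      exact Finset.inf'_le id (by simp [hS, hx])
    · intro hx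
      have h := mono hx
      rw [hfa] at h
      exact le_antisymm (Bool.le_true _) h
  have hbot : f ⊥ = false := by
    have h := mono (bot_le : (⊥ : Fin m → Bool) ≤ x₁)
    rw [hx₁] at h
    exact le_antisymm h (Bool.false_le _)
  have hane : ∃ k, a k = true := by
    by_contra h
    push_neg at h
    have hab : a = ⊥ := by
      funext t
      have hk := h t
      simp only [Bool.not_eq_true] at hk
      simpa using hk
    rw [hab, hbot] at hfa
    exact absurd hfa (by simp)
  obtain ⟨k, hk⟩ := hane
  have huniq : ∀ l, a l = true → l = k := by
    intro l hl
    by_contra hne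
    have hfx : f (fun t => !(decide (t = k))) = false := by
      cases hfx : f (fun t => !(decide (t = k))) with
      | false => rfl
      | true =>
        have h2 := (hmem _).1 hfx k
        rw [hk] at h2
        simp at h2
        exact Bool.noConfusion (le_antisymm h2 (Bool.false_le _))
    have hfy : f (fun t => !(decide (t = l))) = false := by
      cases hfy : f (fun t => !(decide (t = l))) with
      | false => rfl
      | true =>
        have h2 := (hmem _).1 hfy l
        rw [hl] at h2
        simp at h2
        exact Bool.noConfusion (le_antisymm h2 (Bool.false_le _))
    have hxy : (fun t => !(decide (t = k))) ⊔ (fun t => !(decide (t = l))) =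
        (⊤ : Fin m → Bool) := by
      funext t
      show (!(decide (t = k))) ⊔ (!(decide (t = l))) = ⊤
      by_cases h1 : t = k
      · have h2 : ¬t = l := by rw [h1]; exact fun hh => hne hh.symm
        simp [h2]
      · simp [h1]
    have hft : f ⊤ = true := by
      have h := mono (le_top : a ≤ ⊤)
      rw [hfa] at h
      exact le_antisymm (Bool.le_true _) h
    rw [← hxy, hsup, hfx, hfy] at hft
    exact absurd hft (by decide)
  refine ⟨k, fun x => ?_⟩
  have hiff : f x = true ↔ x k = true := by
    rw [hmem]
    constructor
    · intro h
      have h2 := h k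
      rw [hk] at h2
      exact le_antisymm (Bool.le_true _) h2
    · intro h t
      by_cases ht : t = k
      · subst ht; rw [hk, h]
      · have hat : a t = false := by
          cases hat : a t with
          | false => rfl
          | true => exact absurd (huniq t hat) ht
        rw [hat]
        exact Bool.false_le _
  cases h1 : x k with
  | true => rw [hiff.2 h1]
  | false =>
    cases h2 : f x with
    | false => rfl
    | true =>
      have h3 := hiff.1 h2
      rw [h1] at h3
      exact Bool.noConfusion h3

/-- Permutations preserve the class. -/
lemma perm_D {m : ℕ} (e : Equiv.Perm (Fin (m + 1))) :
    ∀ (n : ℕ) (f : (Fin (m + 1) → Bool) → (Fin n → Bool)), DegenTranspComposite f →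
      DegenTranspComposite (fun x => f (x ∘ e)) := by
  have hmem : e ∈ Submonoid.closure
      (Set.range fun i : Fin m => Equiv.swap i.castSucc i.succ) := by
    rw [Equiv.Perm.mclosure_swap_castSucc_succ m]
    trivial
  induction hmem using Submonoid.closure_induction with
  | mem σ hσ =>
    obtain ⟨i, rfl⟩ := hσ
    intro n f hf
    exact DegenTranspComposite.transp f i.castSucc i.succ (by simp) hf
  | one =>
    intro n f hf
    simpa using hf
  | mul a b _ _ ha hb =>
    intro n f hf
    have h1 := hb n f hf
    have h2 := ha n (fun y => f (y ∘ b)) h1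
    have : (fun x : Fin (m+1) → Bool => (fun y => f (y ∘ b)) (x ∘ a)) =
        fun x => f (x ∘ (a * b)) := by
      funext x
      simp [Function.comp_def, Equiv.Perm.mul_apply]
    rwa [this] at h2

/-- Precomposition with an injection is in the class. -/
lemma inj_D : ∀ (m n : ℕ) (s : Fin n → Fin m), Function.Injective s →
    DegenTranspComposite (fun x : Fin m → Bool => x ∘ s) := by
  intro m
  induction m with
  | zero =>
    intro n s hs
    have hn : n = 0 := by
      cases n with
      | zero => rfl
      | succ k => exact (s 0).elim0
    subst hn
    have : (fun x : Fin 0 → Bool => x ∘ s) = id := by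
      funext x
      funext i
      exact i.elim0
    rw [this]
    exact DegenTranspComposite.id 0
  | succ m ih =>
    intro n s hs
    by_cases hsurj : Function.Surjective s
    · have hb : Function.Bijective s := ⟨hs, hsurj⟩
      have hcard : n = m + 1 := by
        have := Fintype.card_of_bijective hb
        simpa using this
      subst hcard
      have := perm_D (Equiv.ofBijective s hb) (m + 1) id (DegenTranspComposite.id (m + 1))
      simpa using this
    · have hex : ∃ j, ∀ i, s i ≠ j := by
        by_contra h
        push_neg at h
        exact hsurj fun j => by obtain ⟨i, hi⟩ := h j; exact ⟨i, hi⟩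
      obtain ⟨j, hj⟩ := hex
      have hchoice : ∀ i : Fin n, ∃ t : Fin m, j.succAbove t = s i := fun i =>
        Fin.exists_succAbove_eq (hj i)
      choose s' hs' using hchoice
      have hs'inj : Function.Injective s' := by
        intro i i' h
        apply hs
        rw [← hs' i, ← hs' i', h]
      have hD := DegenTranspComposite.codeg _ j (ih n s' hs'inj)
      have heq : (fun x : Fin (m + 1) → Bool => (x ∘ j.succAbove) ∘ s') =
          fun x : Fin (m + 1) → Bool => x ∘ s := by
        funext x
        funext i
        simp [Function.comp_def, hs']
      rwa [heq] at hD

end DTCAux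

/-- A map between finite Boolean lattices is a surjective lattice homomorphism
iff it is a composite of codegeneracies and principal coordinate transpositions. -/
theorem surjective_latticeHom_iff_composite (m n : ℕ)
    (φ : (Fin m → Bool) → (Fin n → Bool)) :
    (Function.Surjective φ ∧
        (∀ x y : Fin m → Bool, φ (x ⊔ y) = φ x ⊔ φ y) ∧
        (∀ x y : Fin m → Bool, φ (x ⊓ y) = φ x ⊓ φ y)) ↔
      DegenTranspComposite φ := by
  constructor
  · rintro ⟨hsurj, hsup, hinf⟩
    classical
    -- each coordinate of φ is a coordinate projection
    have hcoord : ∀ i : Fin n, ∃ k : Fin m, ∀ x, φ x i = x k := by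
      intro i
      apply DTCAux.exists_coord
      · intro x y
        have := congrFun (hsup x y) i
        simpa using this
      · intro x y
        have := congrFun (hinf x y) i
        simpa using this
      · obtain ⟨x, hx⟩ := hsurj (fun _ => true)
        exact ⟨x, by rw [hx]⟩
      · obtain ⟨x, hx⟩ := hsurj (fun _ => false)
        exact ⟨x, by rw [hx]⟩
    choose s hk using hcoord
    have hsinj : Function.Injective s := by
      intro i i' h
      by_contra hne
      obtain ⟨x, hx⟩ := hsurj (fun t => decide (t = i))
      have h1 : φ x i = true := by rw [hx]; simp
      have hne' : ¬i' = i := fun hh => hne hh.symm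
      have h2 : φ x i' = false := by rw [hx]; simp [hne']
      have h3 : φ x i = φ x i' := by rw [hk i x, hk i' x, h]
      rw [h1, h2] at h3
      exact Bool.noConfusion h3
    have hφ : φ = fun x => x ∘ s := by
      funext x
      funext i
      exact hk i x
    rw [hφ]
    exact DTCAux.inj_D m n s hsinj
  · intro hD
    induction hD with
    | id n => exact ⟨Function.surjective_id, fun _ _ => rfl, fun _ _ => rfl⟩
    | codeg f j hf ih =>
      obtain ⟨hs, h1, h2⟩ := ih
      refine ⟨?_, fun x y => h1 _ _, fun x y => h2 _ _⟩
      have hpre : Function.Surjective (fun x : Fin _ → Bool => x ∘ j.succAbove) :=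
        (Fin.succAbove_right_injective (p := j)).surjective_comp_right
      exact hs.comp hpre
    | transp f i j hij hf ih =>
      obtain ⟨hs, h1, h2⟩ := ih
      refine ⟨?_, fun x y => h1 _ _, fun x y => h2 _ _⟩
      have hpre : Function.Surjective (fun x : Fin _ → Bool => x ∘ (Equiv.swap i j)) :=
        (Equiv.swap i j).injective.surjective_comp_right
      exact hs.comp hpre
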